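/- Let G be a finite cyclic group and let m ≥ 3 be odd. For i = 1,...,m let A_i = {a_{i1},...,a_{ik}} be a k-subset of G. Then there exist permutations π_2,...,π_m ∈ S_k such that the products a_{1j}·a_{2π_2(j)}···a_{mπ_m(j)}, for j = 1,...,k, are pairwise distinct. -/

import Mathlib

open Finset Equiv Matrix

private lemma sun_inner {k : ℕ} (θ : Fin k → ℂ) (σ : Equiv.Perm (Fin k)) :
    ∑ τ : Equiv.Perm (Fin k), ((Equiv.Perm.sign τ : ℤ) : ℂ) * ∏ j, θ (τ (σ j)) ^ (j : ℕ)
      = ((Equiv.Perm.sign σ : ℤ) : ℂ) * (Matrix.vandermonde θ).det := by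
  rw [← Equiv.sum_comp (Equiv.mulRight σ⁻¹)
    (fun τ => ((Equiv.Perm.sign τ : ℤ) : ℂ) * ∏ j, θ (τ (σ j)) ^ (j : ℕ))]
  simp only [Equiv.coe_mulRight, Equiv.Perm.mul_apply, Equiv.Perm.coe_inv, Equiv.symm_apply_apply]
  rw [det_apply', Finset.mul_sum]
  refine Finset.sum_congr rfl fun ρ _ => ?_
  simp only [vandermonde_apply]
  have hsg : Equiv.Perm.sign (ρ * σ⁻¹) = Equiv.Perm.sign ρ * Equiv.Perm.sign σ := by
    rw [Equiv.Perm.sign_mul, Equiv.Perm.sign_inv]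
  rw [hsg]
  push_cast
  ring

private lemma sun_core {m k : ℕ} (hm : Odd m) (θ : Fin m → Fin k → ℂ)
    (hθ : ∀ i, Function.Injective (θ i)) :
    ∃ π : Fin m → Equiv.Perm (Fin k),
      Function.Injective fun j : Fin k => ∏ i, θ i (π i j) := by
  classical
  have key : ∑ π : Fin m → Equiv.Perm (Fin k),
      (∏ i, ((Equiv.Perm.sign (π i) : ℤ) : ℂ)) *
        (Matrix.vandermonde fun j => ∏ i, θ i (π i j)).det
      = (Fintype.card (Equiv.Perm (Fin k)) : ℂ) * ∏ i, (Matrix.vandermonde (θ i)).det := by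
    calc
      ∑ π : Fin m → Equiv.Perm (Fin k),
          (∏ i, ((Equiv.Perm.sign (π i) : ℤ) : ℂ)) *
            (Matrix.vandermonde fun j => ∏ i, θ i (π i j)).det
        = ∑ π : Fin m → Equiv.Perm (Fin k), ∑ σ : Equiv.Perm (Fin k),
            ((Equiv.Perm.sign σ : ℤ) : ℂ) *
              ∏ i, (((Equiv.Perm.sign (π i) : ℤ) : ℂ) * ∏ j, θ i (π i (σ j)) ^ (j : ℕ)) := by
          refine Finset.sum_congr rfl fun π _ => ?_
          rw [det_apply', Finset.mul_sum]
          refine Finset.sum_congr rfl fun σ _ => ?_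
          simp only [vandermonde_apply, ← Finset.prod_pow]
          rw [Finset.prod_comm (s := Finset.univ) (t := Finset.univ)
            (f := fun j i => θ i (π i (σ j)) ^ (j : ℕ)), Finset.prod_mul_distrib]
          ring
      _ = ∑ σ : Equiv.Perm (Fin k), ((Equiv.Perm.sign σ : ℤ) : ℂ) *
            ∏ i, ∑ τ : Equiv.Perm (Fin k),
              ((Equiv.Perm.sign τ : ℤ) : ℂ) * ∏ j, θ i (τ (σ j)) ^ (j : ℕ) := by
          rw [Finset.sum_comm]
          refine Finset.sum_congr rfl fun σ _ => ?_
          rw [Finset.prod_univ_sum, ← Finset.mul_sum]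
          simp [Fintype.piFinset_univ]
      _ = ∑ σ : Equiv.Perm (Fin k), ((Equiv.Perm.sign σ : ℤ) : ℂ) *
            ∏ i, (((Equiv.Perm.sign σ : ℤ) : ℂ) * (Matrix.vandermonde (θ i)).det) := by
          refine Finset.sum_congr rfl fun σ _ => ?_
          simp_rw [sun_inner]
      _ = ∑ _σ : Equiv.Perm (Fin k), ∏ i, (Matrix.vandermonde (θ i)).det := by
          refine Finset.sum_congr rfl fun σ _ => ?_
          rw [Finset.prod_mul_distrib, Finset.prod_const, Finset.card_univ, Fintype.card_fin,
            ← mul_assoc]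
          have hsgn : ((Equiv.Perm.sign σ : ℤ) : ℂ) = 1 ∨ ((Equiv.Perm.sign σ : ℤ) : ℂ) = -1 := by
            rcases Int.units_eq_one_or (Equiv.Perm.sign σ) with h | h <;> simp [h]
          obtain ⟨c, hc⟩ := hm
          rcases hsgn with h | h <;> rw [h]
          · simp
          · rw [show (-1 : ℂ) * (-1) ^ m = (-1) ^ (m + 1) by ring, Even.neg_one_pow ⟨c + 1, by omega⟩,
              one_mul]
      _ = _ := by rw [Finset.sum_const, Finset.card_univ, nsmul_eq_mul]
  have hD : ∀ i, (Matrix.vandermonde (θ i)).det ≠ 0 := fun i =>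
    Matrix.det_vandermonde_ne_zero_iff.2 (hθ i)
  have hS : ∑ π : Fin m → Equiv.Perm (Fin k),
      (∏ i, ((Equiv.Perm.sign (π i) : ℤ) : ℂ)) *
        (Matrix.vandermonde fun j => ∏ i, θ i (π i j)).det ≠ 0 := by
    rw [key]
    exact mul_ne_zero (Nat.cast_ne_zero.2 Fintype.card_ne_zero)
      (Finset.prod_ne_zero_iff.2 fun i _ => hD i)
  obtain ⟨π, -, hπ⟩ := Finset.exists_ne_zero_of_sum_ne_zero hS
  refine ⟨π, Matrix.det_vandermonde_ne_zero_iff.1 fun h => hπ ?_⟩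
  rw [h, mul_zero]

/-- Sun's theorem: for an odd `m ≥ 3` and `k`-subsets `A_1, ..., A_m` of a finite
cyclic group, there are permutations `π_2, ..., π_m` (with `π_1` the identity) such
that the products `a_{1j} a_{2 π_2(j)} ⋯ a_{m π_m(j)}` are pairwise distinct. -/
theorem sun_odd_products {G : Type*} [CommGroup G] [Fintype G] [IsCyclic G]
    {m k : ℕ} (hm : Odd m) (hm3 : 3 ≤ m) (hk : 0 < k)
    (a : Fin m → Fin k → G) (ha : ∀ i, Function.Injective (a i)) :
    ∃ π : Fin m → Equiv.Perm (Fin k), π ⟨0, by omega⟩ = 1 ∧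
      Function.Injective (fun j : Fin k => ∏ i, a i (π i j)) := by
  classical
  set n := Nat.card G with hn
  have hn0 : n ≠ 0 := Nat.card_pos.ne'
  haveI : NeZero n := ⟨hn0⟩
  have hζ : IsPrimitiveRoot (Complex.exp (2 * Real.pi * Complex.I / n)) n :=
    Complex.isPrimitiveRoot_exp n hn0
  set χ : AddChar (ZMod n) ℂ := AddChar.zmodChar n hζ.pow_eq_one with hχ
  have hχinj : Function.Injective χ := by
    intro x y hxy
    rw [hχ, AddChar.zmodChar_apply, AddChar.zmodChar_apply] at hxy
    have := hζ.pow_inj (ZMod.val_lt x) (ZMod.val_lt y) hxy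
    exact ZMod.val_injective n this
  set e : Multiplicative (ZMod n) ≃* G := (zmodCyclicMulEquiv (inferInstance : IsCyclic G))
  let ψ : G →* ℂ := χ.toMonoidHom.comp e.symm.toMonoidHom
  have hψinj : Function.Injective ψ := by
    intro x y hxy
    exact e.symm.injective (Multiplicative.toAdd.injective (hχinj hxy))
  obtain ⟨π, hπ⟩ := sun_core hm (fun i j => ψ (a i j)) fun i => hψinj.comp (ha i)
  set z : Fin m := ⟨0, by omega⟩
  refine ⟨fun i => π i * (π z)⁻¹, by simp, ?_⟩
  intro j j' h
  have h2 : (fun j => ∏ i, ψ (a i (π i j))) ((π z)⁻¹ j)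
      = (fun j => ∏ i, ψ (a i (π i j))) ((π z)⁻¹ j') := by
    simpa [map_prod, Equiv.Perm.mul_apply] using congrArg ψ h
  exact (π z)⁻¹.injective (hπ h2)
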